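/- For real a < 0, b > 0, z > 0 with Φ(a,b,z) = 0 and k = b/2 − a, the integral ∫₀^z (k/t − 1/2) e^{-t} t^b Φ²(a,b,t) dt equals z^{b+1} e^{-z} [((2k − b + 1)/(2z)) Φ²(a,b,z) + (a/b)² Φ²(a+1,b+1,z)] + z^b e^{-z} (a/b)(b − z − 1) Φ(a,b,z) Φ(a+1,b+1,z). -/

import Mathlib

open Real

noncomputable def pc (a b : ℝ) (n : ℕ) : ℝ :=
  (ascPochhammer ℝ n).eval a / ((ascPochhammer ℝ n).eval b * (n.factorial : ℝ))

lemma pc_zero (a b : ℝ) : pc a b 0 = 1 := by simp [pc]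

lemma poch_succ_left (n : ℕ) (x : ℝ) :
    (ascPochhammer ℝ (n+1)).eval x = x * (ascPochhammer ℝ n).eval (x+1) := by
  rw [ascPochhammer_succ_left]
  simp [Polynomial.eval_comp]

lemma pc_succ (a b : ℝ) (hb : 0 < b) (n : ℕ) :
    pc a b (n+1) = pc a b n * ((a + n) / ((b + n) * ((n:ℝ)+1))) := by
  have hB : (0:ℝ) < (ascPochhammer ℝ n).eval b := ascPochhammer_pos n b hb
  have h1 : ((n:ℝ)+1) ≠ 0 := by positivity
  have h2 : ((n.factorial : ℝ)) ≠ 0 := Nat.cast_ne_zero.2 n.factorial_ne_zero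
  have h3 : b + (n:ℝ) ≠ 0 := by positivity
  unfold pc
  rw [ascPochhammer_succ_eval, ascPochhammer_succ_eval, Nat.factorial_succ]
  push_cast
  field_simp

lemma pc_deriv (a b : ℝ) (hb : 0 < b) (n : ℕ) :
    pc a b (n+1) * ((n:ℝ)+1) = a / b * pc (a+1) (b+1) n := by
  have hB : (0:ℝ) < (ascPochhammer ℝ n).eval (b+1) := ascPochhammer_pos n _ (by linarith)
  have h1 : ((n:ℝ)+1) ≠ 0 := by positivity
  have h2 : ((n.factorial : ℝ)) ≠ 0 := Nat.cast_ne_zero.2 n.factorial_ne_zero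
  unfold pc
  rw [poch_succ_left n a, poch_succ_left n b, Nat.factorial_succ]
  push_cast
  field_simp

lemma pc_abs_succ (a b : ℝ) (hb : 0 < b) (n : ℕ) :
    |pc a b (n+1)| = |pc a b n| * (|a + n| / ((b + n) * ((n:ℝ)+1))) := by
  rw [pc_succ a b hb n, abs_mul, abs_div,
    abs_of_pos (show (0:ℝ) < (b + n) * ((n:ℝ)+1) by positivity)]

lemma summable_aux (a b : ℝ) (hb : 0 < b) (R : ℝ) (hR : 0 ≤ R) :
    Summable (fun n : ℕ => |pc a b n| * ((n:ℝ)+1) * R ^ n) := by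
  apply summable_of_ratio_norm_eventually_le (r := 1/2) (by norm_num)
  filter_upwards [Filter.eventually_ge_atTop (⌈|a|⌉₊ + ⌈8*R⌉₊ + 1)] with n hn
  have h1 : ⌈|a|⌉₊ ≤ n := by omega
  have h2 : ⌈8*R⌉₊ ≤ n := by omega
  have ha' : |a| ≤ (n:ℝ) := (Nat.le_ceil _).trans (by exact_mod_cast h1)
  have hr' : 8*R ≤ (n:ℝ) := (Nat.le_ceil _).trans (by exact_mod_cast h2)
  have hn1 : (1:ℝ) ≤ (n:ℝ) := by exact_mod_cast (by omega : 1 ≤ n)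
  have habs : |a + (n:ℝ)| ≤ |a| + (n:ℝ) := by
    calc |a + (n:ℝ)| ≤ |a| + |(n:ℝ)| := abs_add_le a _
    _ = |a| + (n:ℝ) := by rw [abs_of_nonneg (by positivity : (0:ℝ) ≤ (n:ℝ))]
  rw [Real.norm_of_nonneg (by positivity), Real.norm_of_nonneg (by positivity)]
  calc |pc a b (n+1)| * ((((n+1):ℕ):ℝ)+1) * R ^ (n+1)
      = (|pc a b n| * R ^ n) * (|a + (n:ℝ)| * ((n:ℝ)+2) * R / ((b + n) * ((n:ℝ)+1))) := by
        rw [pc_abs_succ a b hb n, pow_succ]; push_cast; ring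
    _ ≤ (|pc a b n| * R ^ n) * (((n:ℝ)+1)/2) := by
        apply mul_le_mul_of_nonneg_left _ (by positivity)
        rw [div_le_iff₀ (by positivity)]
        nlinarith [abs_nonneg (a + (n:ℝ)), sq_nonneg ((n:ℝ)+1), mul_nonneg hR (by positivity : (0:ℝ) ≤ (n:ℝ))]
    _ = 1/2 * (|pc a b n| * ((n:ℝ)+1) * R ^ n) := by ring

lemma summable_phi (a b : ℝ) (hb : 0 < b) (t : ℝ) :
    Summable (fun n : ℕ => pc a b n * t ^ n) := by
  apply Summable.of_norm_bounded (summable_aux a b hb |t| (abs_nonneg t))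
  intro n
  rw [Real.norm_eq_abs, abs_mul, abs_pow]
  have h1 : (0:ℝ) ≤ |pc a b n| * |t| ^ n := by positivity
  nlinarith [h1]

/-- The confluent hypergeometric function of the first kind
`Φ(a,b,z) = Σ_{n≥0} (a)_n / ((b)_n n!) z^n`. -/
noncomputable def Phi (a b z : ℝ) : ℝ :=
  ∑' n : ℕ, ((ascPochhammer ℝ n).eval a / ((ascPochhammer ℝ n).eval b * (n.factorial : ℝ))) * z ^ n

lemma Phi_eq (a b : ℝ) : Phi a b = fun z => ∑' n : ℕ, pc a b n * z ^ n := rfl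

lemma hasDerivAt_phi (a b : ℝ) (hb : 0 < b) (t : ℝ) :
    HasDerivAt (Phi a b) (a / b * Phi (a+1) (b+1) t) t := by
  set R : ℝ := |t| + 1 with hR
  have habs := abs_nonneg t
  have hR0 : (0:ℝ) ≤ R := by positivity
  have hR1 : (1:ℝ) ≤ R := by simp only [hR]; linarith
  have bnd : ∀ (n : ℕ), ∀ (y : ℝ), y ∈ Set.Ioo (-R) R →
      ‖pc a b n * ((n:ℝ) * y ^ (n-1))‖ ≤ |pc a b n| * ((n:ℝ)+1) * R ^ n := by
    intro n y hy
    have hyR : |y| ≤ R := by rw [abs_le]; exact ⟨hy.1.le, hy.2.le⟩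
    have hp : |y| ^ (n-1) ≤ R ^ n :=
      le_trans (pow_le_pow_left₀ (abs_nonneg y) hyR _) (pow_le_pow_right₀ hR1 (Nat.sub_le n 1))
    rw [Real.norm_eq_abs, abs_mul, abs_mul, abs_pow, Nat.abs_cast]
    have hn0 : (0:ℝ) ≤ (n:ℝ) := by positivity
    calc |pc a b n| * ((n:ℝ) * |y| ^ (n-1)) ≤ |pc a b n| * (((n:ℝ)+1) * R ^ n) := by
          apply mul_le_mul_of_nonneg_left _ (abs_nonneg _)
          nlinarith [pow_nonneg hR0 n, mul_le_mul_of_nonneg_left hp hn0]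
      _ = |pc a b n| * ((n:ℝ)+1) * R ^ n := by ring
  have hmem : t ∈ Set.Ioo (-R) R := by
    constructor <;> (cases abs_cases t with
      | inl h => simp only [hR]; linarith [h.1]
      | inr h => simp only [hR]; linarith [h.1])
  have hmem0 : (0:ℝ) ∈ Set.Ioo (-R) R := by constructor <;> (simp only [hR]; linarith)
  have H := hasDerivAt_tsum_of_isPreconnected (summable_aux a b hb R hR0)
    (isOpen_Ioo (a := -R) (b := R)) isPreconnected_Ioo
    (fun n y _ => (hasDerivAt_pow n y).const_mul (pc a b n))
    bnd hmem0 (summable_phi a b hb 0) hmem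
  have Hsum : Summable (fun n : ℕ => pc a b n * ((n:ℝ) * t ^ (n-1))) :=
    Summable.of_norm_bounded (summable_aux a b hb R hR0) (fun n => bnd n t hmem)
  have e : (∑' n : ℕ, pc a b n * ((n:ℝ) * t ^ (n-1))) = a / b * Phi (a+1) (b+1) t := by
    rw [Summable.tsum_eq_zero_add Hsum]
    have e0 : pc a b 0 * (((0:ℕ):ℝ) * t ^ (0-1)) = 0 := by norm_num
    have e1 : ∀ n : ℕ, pc a b (n+1) * ((((n+1):ℕ):ℝ) * t ^ ((n+1)-1)) =
        a / b * (pc (a+1) (b+1) n * t ^ n) := by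
      intro n
      have h := pc_deriv a b hb n
      simp only [Nat.add_sub_cancel]
      push_cast
      linear_combination t ^ n * h
    rw [e0, zero_add, tsum_congr e1, tsum_mul_left, Phi_eq]
  rw [Phi_eq]
  rw [e] at H
  exact H

lemma pc_ode (a b : ℝ) (hb : 0 < b) (n : ℕ) :
    (a+1)/(b+1) * pc (a+2) (b+2) n =
      pc (a+1) (b+1) n + b * pc a b (n+1) - b * pc (a+1) (b+1) (n+1) := by
  have hb1 : (0:ℝ) < b + 1 := by linarith
  have h1 := pc_deriv (a+1) (b+1) hb1 n
  rw [show a+1+1 = a+2 by ring, show b+1+1 = b+2 by ring] at h1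
  rw [← h1]
  have hB : (0:ℝ) < (ascPochhammer ℝ n).eval (b+1) := ascPochhammer_pos n _ hb1
  have hF : ((n.factorial : ℝ)) ≠ 0 := Nat.cast_ne_zero.2 n.factorial_ne_zero
  have hN : ((n:ℝ)+1) ≠ 0 := by positivity
  have hBn : b + 1 + (n:ℝ) ≠ 0 := by positivity
  unfold pc
  rw [poch_succ_left n a, poch_succ_left n b, ascPochhammer_succ_eval n (a+1),
    ascPochhammer_succ_eval n (b+1), Nat.factorial_succ]
  push_cast
  field_simp
  ring

lemma phi_ode (a b : ℝ) (hb : 0 < b) (t : ℝ) :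
    t * ((a+1)/(b+1) * Phi (a+2) (b+2) t) = (t - b) * Phi (a+1) (b+1) t + b * Phi a b t := by
  have hb1 : (0:ℝ) < b + 1 := by linarith
  have hb2 : (0:ℝ) < b + 2 := by linarith
  have hs0 := summable_phi a b hb t
  have hs1 := summable_phi (a+1) (b+1) hb1 t
  have hs2 := summable_phi (a+2) (b+2) hb2 t
  rw [Phi_eq, Phi_eq, Phi_eq]
  simp only
  have hsub : Summable (fun n : ℕ =>
      b * (pc a b n * t ^ n) - b * (pc (a+1) (b+1) n * t ^ n)) :=
    (hs0.mul_left b).sub (hs1.mul_left b)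
  have hR1s : Summable (fun n : ℕ => pc (a+1) (b+1) n * (t ^ n * t)) := by
    have := hs1.mul_right t
    refine this.congr fun n => by ring
  have hshift : Summable (fun n : ℕ =>
      b * (pc a b (n+1) * t ^ (n+1)) - b * (pc (a+1) (b+1) (n+1) * t ^ (n+1))) :=
    hsub.comp_injective (add_left_injective 1)
  have L : t * ((a+1)/(b+1) * (∑' n : ℕ, pc (a+2) (b+2) n * t ^ n))
      = ∑' n : ℕ, (a+1)/(b+1) * pc (a+2) (b+2) n * (t ^ n * t) := by
    calc t * ((a+1)/(b+1) * (∑' n : ℕ, pc (a+2) (b+2) n * t ^ n))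
        = ((a+1)/(b+1) * t) * (∑' n : ℕ, pc (a+2) (b+2) n * t ^ n) := by ring
      _ = ∑' n : ℕ, ((a+1)/(b+1) * t) * (pc (a+2) (b+2) n * t ^ n) := tsum_mul_left.symm
      _ = ∑' n : ℕ, (a+1)/(b+1) * pc (a+2) (b+2) n * (t ^ n * t) :=
          tsum_congr fun n => by ring
  have R1 : t * (∑' n : ℕ, pc (a+1) (b+1) n * t ^ n)
      = ∑' n : ℕ, pc (a+1) (b+1) n * (t ^ n * t) := by
    rw [← tsum_mul_left]
    exact tsum_congr fun n => by ring
  have R2 : b * (∑' n : ℕ, pc a b n * t ^ n)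
        - b * (∑' n : ℕ, pc (a+1) (b+1) n * t ^ n)
      = ∑' n : ℕ, (b * (pc a b (n+1) * t ^ (n+1))
          - b * (pc (a+1) (b+1) (n+1) * t ^ (n+1))) := by
    rw [← tsum_mul_left, ← tsum_mul_left, ← Summable.tsum_sub (hs0.mul_left b) (hs1.mul_left b),
      Summable.tsum_eq_zero_add hsub]
    simp [pc_zero]
  have key : (∑' n : ℕ, (a+1)/(b+1) * pc (a+2) (b+2) n * (t ^ n * t))
      = ∑' n : ℕ, (pc (a+1) (b+1) n * (t ^ n * t)
          + (b * (pc a b (n+1) * t ^ (n+1)) - b * (pc (a+1) (b+1) (n+1) * t ^ (n+1)))) := by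
    refine tsum_congr fun n => ?_
    rw [pow_succ]
    linear_combination (t ^ n * t) * pc_ode a b hb n
  rw [L, key, Summable.tsum_add hR1s hshift, ← R1, ← R2]
  ring

lemma Phi_continuous (a b : ℝ) (hb : 0 < b) : Continuous (Phi a b) :=
  continuous_iff_continuousAt.2 fun t => (hasDerivAt_phi a b hb t).continuousAt

lemma rpow_cont (c : ℝ) (hc : 0 ≤ c) : Continuous fun t : ℝ => t ^ c :=
  continuous_iff_continuousAt.2 fun x => Real.continuousAt_rpow_const x c (Or.inr hc)

noncomputable def Faux (a b t : ℝ) : ℝ :=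
  Real.exp (-t) * ((1 - 2*a)/2 * t ^ b * Phi a b t ^ 2
    + (a/b)^2 * t ^ (b+1) * Phi (a+1) (b+1) t ^ 2
    + (a/b) * t ^ b * (b - t - 1) * Phi a b t * Phi (a+1) (b+1) t)

lemma Faux_cont (a b : ℝ) (hb : 0 < b) : Continuous (Faux a b) := by
  have hb1 : (0:ℝ) < b + 1 := by linarith
  have h0 := Phi_continuous a b hb
  have h1 := Phi_continuous (a+1) (b+1) hb1
  have hcb := rpow_cont b hb.le
  have hcb1 := rpow_cont (b+1) hb1.le
  unfold Faux
  apply Continuous.mul (Real.continuous_exp.comp continuous_neg)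
  apply Continuous.add
  apply Continuous.add
  · exact (continuous_const.mul hcb).mul (h0.pow 2)
  · exact (continuous_const.mul hcb1).mul (h1.pow 2)
  · exact ((((continuous_const.mul hcb).mul
      ((continuous_const.sub continuous_id).sub continuous_const)).mul h0).mul h1)

lemma Faux_zero (a b : ℝ) (hb : 0 < b) : Faux a b 0 = 0 := by
  unfold Faux
  rw [Real.zero_rpow hb.ne', Real.zero_rpow (show b + 1 ≠ 0 by positivity)]
  ring

lemma Faux_deriv (a b : ℝ) (hb : 0 < b) (t : ℝ) (ht : 0 < t) :
    HasDerivAt (Faux a b)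
      (((b/2 - a)/t - 1/2) * Real.exp (-t) * t ^ b * Phi a b t ^ 2) t := by
  have hb1 : (0:ℝ) < b + 1 := by linarith
  have hu := hasDerivAt_phi a b hb t
  have hv := hasDerivAt_phi (a+1) (b+1) hb1 t
  rw [show a+1+1 = a+2 by ring, show b+1+1 = b+2 by ring] at hv
  have hpb : HasDerivAt (fun s : ℝ => s ^ b) (b * t ^ (b - 1)) t :=
    Real.hasDerivAt_rpow_const (Or.inl ht.ne')
  have hpb1 : HasDerivAt (fun s : ℝ => s ^ (b+1)) ((b+1) * t ^ (b+1-1)) t :=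
    Real.hasDerivAt_rpow_const (Or.inl ht.ne')
  have hexp : HasDerivAt (fun s : ℝ => Real.exp (-s)) (-Real.exp (-t)) t := by
    simpa using (hasDerivAt_neg t).exp
  have hlin : HasDerivAt (fun s : ℝ => b - s - 1) (-1) t := by
    simpa using ((hasDerivAt_id t).const_sub b).sub_const 1
  have H := hexp.mul ((((hpb.const_mul ((1 - 2*a)/2)).mul (hu.pow 2)).add
      ((hpb1.const_mul ((a/b)^2)).mul (hv.pow 2))).add
      ((((hpb.const_mul (a/b)).mul hlin).mul hu).mul hv))
  unfold Faux
  refine H.congr_deriv ?_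
  simp only [Pi.mul_apply, Pi.pow_apply, Pi.add_apply]
  rw [show b + 1 - 1 = b by ring]
  have hode : (a+1)/(b+1) * Phi (a+2) (b+2) t
      = ((t - b) * Phi (a+1) (b+1) t + b * Phi a b t) / t := by
    rw [eq_div_iff ht.ne']
    linear_combination phi_ode a b hb t
  rw [hode]
  rw [show t ^ (b-1) = t ^ b / t by rw [Real.rpow_sub ht, Real.rpow_one],
      show t ^ (b+1) = t ^ b * t by rw [Real.rpow_add ht, Real.rpow_one]]
  have htne : t ≠ 0 := ht.ne'
  have hbne : b ≠ 0 := hb.ne'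
  have hb1ne : b + 1 ≠ 0 := hb1.ne'
  field_simp
  ring

theorem stmt1 (a b z : ℝ) (ha : a < 0) (hb : 0 < b) (hz : 0 < z)
    (hzero : Phi a b z = 0) (k : ℝ) (hk : k = b / 2 - a) :
    ∫ t in (0 : ℝ)..z, (k / t - 1 / 2) * Real.exp (-t) * t ^ b * (Phi a b t) ^ 2 =
      z ^ (b + 1) * Real.exp (-z) *
          (((2 * k - b + 1) / (2 * z)) * (Phi a b z) ^ 2 +
            (a / b) ^ 2 * (Phi (a + 1) (b + 1) z) ^ 2) +
        z ^ b * Real.exp (-z) * (a / b) * (b - z - 1) * Phi a b z * Phi (a + 1) (b + 1) z := by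
  subst hk
  have hb1 : (0:ℝ) < b + 1 := by linarith
  have hcont : Continuous fun t => Real.exp (-t) * Phi a b t ^ 2 :=
    (Real.continuous_exp.comp continuous_neg).mul ((Phi_continuous a b hb).pow 2)
  have h1 : IntervalIntegrable (fun t : ℝ => t ^ (b-1)) MeasureTheory.volume 0 z :=
    intervalIntegral.intervalIntegrable_rpow' (by linarith)
  have h2 : IntervalIntegrable (fun t : ℝ => t ^ b) MeasureTheory.volume 0 z :=
    intervalIntegral.intervalIntegrable_rpow' (by linarith)
  have h3 : IntervalIntegrable (fun t : ℝ =>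
      ((b/2 - a) * t ^ (b-1) - 1/2 * t ^ b) * (Real.exp (-t) * Phi a b t ^ 2))
      MeasureTheory.volume 0 z :=
    ((h1.const_mul (b/2 - a)).sub (h2.const_mul (1/2))).mul_continuousOn hcont.continuousOn
  have hInt : IntervalIntegrable (fun t : ℝ =>
      ((b / 2 - a) / t - 1 / 2) * Real.exp (-t) * t ^ b * Phi a b t ^ 2)
      MeasureTheory.volume 0 z := by
    apply h3.congr
    rw [Set.uIoc_of_le hz.le]
    intro x hx
    dsimp only
    have hx0 : (0:ℝ) < x := hx.1
    have hxne : x ≠ 0 := hx0.ne'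
    rw [show x ^ (b-1) = x ^ b / x by rw [Real.rpow_sub hx0, Real.rpow_one]]
    field_simp
  have key := intervalIntegral.integral_eq_sub_of_hasDeriv_right_of_le hz.le
    (Faux_cont a b hb).continuousOn
    (fun x hx => (Faux_deriv a b hb x hx.1).hasDerivWithinAt) hInt
  rw [key, Faux_zero a b hb, sub_zero]
  unfold Faux
  rw [show z ^ (b+1) = z ^ b * z by rw [Real.rpow_add hz, Real.rpow_one]]
  have hzne : z ≠ 0 := hz.ne'
  have hbne : b ≠ 0 := hb.ne'
  field_simp
  ring
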